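/- Let A = fromBlocks H₁ Eᴴ E H₂ be an (m+n)×(m+n) Hermitian complex matrix with smallest eigenvalue λ_{m+n}, and let λ̃_{m+n} be the smallest eigenvalue of à = fromBlocks H₁ 0 0 H₂. Then λ_{m+n} ≤ λ̃_{m+n}; moreover, if λ_{m+n} < λ̃_{m+n}, then η_{m+n} := the distance from λ̃_{m+n} to the spectrum of the block not containing λ̃_{m+n} satisfies λ̃_{m+n} − λ_{m+n} ≤ 2‖E‖² / (η_{m+n} + √(η_{m+n}² + 4‖E‖²)). -/

import Mathlib

open Matrix


/-! ### Auxiliary lemmas -/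

lemma conj_mul_re (z : ℂ) : ((starRingEnd ℂ) z * z).re = Complex.normSq z := by
  simp [Complex.normSq_apply, Complex.mul_re]

lemma dot_self_re {ι : Type*} [Fintype ι] (v : ι → ℂ) :
    (star v ⬝ᵥ v).re = ∑ i, Complex.normSq (v i) := by
  simp [dotProduct, Complex.re_sum, Pi.star_apply, Complex.normSq_apply, Complex.mul_re]

lemma dot_smul_re {ι : Type*} [Fintype ι] (r : ℝ) (v : ι → ℂ) :
    (star v ⬝ᵥ (r • v)).re = r * ∑ i, Complex.normSq (v i) := by
  have h : star v ⬝ᵥ (r • v) = r • (star v ⬝ᵥ v) := dotProduct_smul r (star v) v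
  rw [h, Complex.real_smul, Complex.mul_re, Complex.ofReal_re, Complex.ofReal_im, dot_self_re]
  ring

lemma sum_normSq_eq_norm_sq {ι : Type*} [Fintype ι] (X : EuclideanSpace ℂ ι) :
    ∑ i, Complex.normSq (X i) = ‖X‖ ^ 2 := by
  rw [EuclideanSpace.norm_eq, Real.sq_sqrt (by positivity)]
  exact Finset.sum_congr rfl fun i _ => by
    rw [← Complex.sq_norm]

/-- Rayleigh-type lower bound: a uniform lower bound on the eigenvalues of a Hermitian
matrix gives a lower bound for the quadratic form. -/
lemma aux_rayleigh {ι : Type*} [Fintype ι] [DecidableEq ι] {M : Matrix ι ι ℂ}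
    (hM : M.IsHermitian) {μ : ℝ} (hμ : ∀ i, μ ≤ hM.eigenvalues i) (x : ι → ℂ) :
    μ * ∑ i, Complex.normSq (x i) ≤ (star x ⬝ᵥ M *ᵥ x).re := by
  set X : EuclideanSpace ℂ ι := (WithLp.equiv 2 _).symm x with hX
  set b := hM.eigenvectorBasis with hb
  set c : ι → ℂ := fun i => inner ℂ (b i) X with hc
  have h1 : star x ⬝ᵥ M *ᵥ x = (inner ℂ X ((Matrix.toEuclideanLin M) X) : ℂ) := by
    rw [EuclideanSpace.inner_eq_star_dotProduct, dotProduct_comm]; rfl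
  have h2 : ((Matrix.toEuclideanLin M) X : EuclideanSpace ℂ ι)
      = ∑ i, (hM.eigenvalues i • c i) • b i := by
    conv_lhs => rw [← b.sum_repr' X]
    rw [map_sum]
    refine Finset.sum_congr rfl fun i _ => ?_
    rw [_root_.map_smul]
    have h3 : (Matrix.toEuclideanLin M) (b i) = hM.eigenvalues i • b i := by
      apply (WithLp.equiv 2 _).injective
      simpa using hM.mulVec_eigenvectorBasis i
    rw [h3, smul_comm, smul_assoc]
  have h4 : (inner ℂ X ((Matrix.toEuclideanLin M) X) : ℂ)
      = ∑ i, (hM.eigenvalues i : ℂ) * ((starRingEnd ℂ) (c i) * c i) := by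
    rw [h2, inner_sum]
    refine Finset.sum_congr rfl fun i _ => ?_
    rw [inner_smul_right]
    have : (inner ℂ X (b i) : ℂ) = (starRingEnd ℂ) (c i) := by
      rw [hc, ← inner_conj_symm]
    rw [this]
    push_cast [Complex.real_smul]
    ring
  have h5 : (star x ⬝ᵥ M *ᵥ x).re = ∑ i, hM.eigenvalues i * Complex.normSq (c i) := by
    rw [h1, h4, Complex.re_sum]
    refine Finset.sum_congr rfl fun i _ => ?_
    rw [show ((hM.eigenvalues i : ℂ) * ((starRingEnd ℂ) (c i) * c i)).re
        = hM.eigenvalues i * ((starRingEnd ℂ) (c i) * c i).re by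
      simp [Complex.mul_re, Complex.ofReal_re, Complex.ofReal_im]]
    rw [conj_mul_re]
  have h6 : ∑ i, Complex.normSq (x i) = ∑ i, Complex.normSq (c i) := by
    have hpar : (inner ℂ X X : ℂ) = ∑ i, (starRingEnd ℂ) (c i) * c i := by
      rw [← b.sum_inner_mul_inner X X]
      refine Finset.sum_congr rfl fun i _ => ?_
      rw [← inner_conj_symm X (b i)]
    have hXX : (inner ℂ X X : ℂ) = star x ⬝ᵥ x := by
      rw [EuclideanSpace.inner_eq_star_dotProduct, dotProduct_comm]; rfl
    have := congrArg Complex.re (hXX.symm.trans hpar)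
    rw [Complex.re_sum] at this
    simp only [conj_mul_re] at this
    rw [← this]
    simp [dotProduct, Complex.re_sum, conj_mul_re, Pi.star_apply,
      Complex.normSq_apply]
  rw [h5, h6, Finset.mul_sum]
  exact Finset.sum_le_sum fun i _ => by
    exact mul_le_mul_of_nonneg_right (hμ i) (Complex.normSq_nonneg _)

/-- The purely algebraic estimate. -/
lemma key_alg {δ η ε a b : ℝ} (hδ : 0 < δ) (hη : 0 ≤ η) (hε : 0 ≤ ε)
    (ha : 0 ≤ a) (hb : 0 ≤ b) (hab : 0 < a ∨ 0 < b)
    (h : δ * a ^ 2 + (δ + η) * b ^ 2 ≤ 2 * ε * a * b) :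
    δ ≤ 2 * ε ^ 2 / (η + Real.sqrt (η ^ 2 + 4 * ε ^ 2)) := by
  have ha' : 0 < a := by
    by_contra hc
    push_neg at hc
    have ha0 : a = 0 := le_antisymm hc ha
    subst ha0
    rcases hab with h' | h'
    · exact absurd h' (lt_irrefl 0)
    · nlinarith [mul_pos (show (0:ℝ) < δ + η by linarith) (pow_pos h' 2)]
  have hb' : 0 < b := by
    by_contra hc
    push_neg at hc
    have hb0 : b = 0 := le_antisymm hc hb
    subst hb0
    nlinarith [mul_pos hδ (pow_pos ha' 2)]
  have hkey : δ * (δ + η) ≤ ε ^ 2 := by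
    have hpos : 0 ≤ δ * a ^ 2 + (δ + η) * b ^ 2 := by positivity
    have hsq := mul_le_mul h h hpos (by positivity)
    nlinarith [sq_nonneg (δ * a ^ 2 - (δ + η) * b ^ 2),
      mul_pos (mul_pos ha' hb') (mul_pos ha' hb')]
  have hε' : 0 < ε := by nlinarith
  set s := Real.sqrt (η ^ 2 + 4 * ε ^ 2) with hs
  have hs2 : s ^ 2 = η ^ 2 + 4 * ε ^ 2 := Real.sq_sqrt (by positivity)
  have hs0 : 0 ≤ s := Real.sqrt_nonneg _
  have hηs : 0 < η + s := by
    have : η < s := by nlinarith [sq_nonneg (s - η)]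
    linarith
  rw [le_div_iff₀ hηs]
  have h2δ : 2 * δ + η ≤ s := by
    have h1 : (2 * δ + η) ^ 2 ≤ s ^ 2 := by nlinarith
    nlinarith [sq_nonneg (s - (2 * δ + η))]
  nlinarith [mul_le_mul_of_nonneg_right h2δ (le_of_lt hηs)]

lemma star_sum_elim {m n : ℕ} (x : Fin m → ℂ) (y : Fin n → ℂ) :
    star (Sum.elim x y) = Sum.elim (star x) (star y) := by
  funext i; cases i <;> rfl

lemma dot_block {m n : ℕ} (H₁ : Matrix (Fin m) (Fin m) ℂ) (H₂ : Matrix (Fin n) (Fin n) ℂ)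
    (E : Matrix (Fin n) (Fin m) ℂ) (x : Fin m → ℂ) (y : Fin n → ℂ) :
    star (Sum.elim x y) ⬝ᵥ (Matrix.fromBlocks H₁ Eᴴ E H₂ *ᵥ Sum.elim x y)
      = star x ⬝ᵥ (H₁ *ᵥ x) + star x ⬝ᵥ (Eᴴ *ᵥ y) + star y ⬝ᵥ (E *ᵥ x)
        + star y ⬝ᵥ (H₂ *ᵥ y) := by
  rw [star_sum_elim]
  have h : Matrix.fromBlocks H₁ Eᴴ E H₂ *ᵥ Sum.elim x y
      = Sum.elim (H₁ *ᵥ x + Eᴴ *ᵥ y) (E *ᵥ x + H₂ *ᵥ y) := by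
    rw [fromBlocks_mulVec]; rfl
  rw [h, sumElim_dotProduct_sumElim, dotProduct_add, dotProduct_add]
  ring

lemma cross_conj {m n : ℕ} (E : Matrix (Fin n) (Fin m) ℂ) (x : Fin m → ℂ) (y : Fin n → ℂ) :
    star x ⬝ᵥ (Eᴴ *ᵥ y) = (starRingEnd ℂ) (star y ⬝ᵥ (E *ᵥ x)) := by
  have h : star (star y ⬝ᵥ (E *ᵥ x)) = star (E *ᵥ x) ⬝ᵥ y := by
    rw [star_dotProduct]; simp [dotProduct_comm]
  rw [show ((starRingEnd ℂ) (star y ⬝ᵥ (E *ᵥ x)) = star (star y ⬝ᵥ (E *ᵥ x))) from rfl, h,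
    star_mulVec, ← Matrix.dotProduct_mulVec]

/-- The spectral norm (largest singular value) of a complex matrix. -/
noncomputable def specNorm {p q : ℕ} (M : Matrix (Fin p) (Fin q) ℂ) : ℝ :=
  ‖LinearMap.toContinuousLinearMap (Matrix.toEuclideanLin M)‖

lemma specNorm_nonneg {p q : ℕ} (M : Matrix (Fin p) (Fin q) ℂ) : 0 ≤ specNorm M :=
  norm_nonneg _

lemma cross_bound {m n : ℕ} (E : Matrix (Fin n) (Fin m) ℂ) (x : Fin m → ℂ) (y : Fin n → ℂ) :
    -(specNorm E * Real.sqrt (∑ i, Complex.normSq (x i)) * Real.sqrt (∑ j, Complex.normSq (y j)))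
      ≤ (star y ⬝ᵥ (E *ᵥ x)).re := by
  set X : EuclideanSpace ℂ (Fin m) := (WithLp.equiv 2 _).symm x with hX
  set Y : EuclideanSpace ℂ (Fin n) := (WithLp.equiv 2 _).symm y with hY
  have hXn : Real.sqrt (∑ i, Complex.normSq (x i)) = ‖X‖ := by
    rw [show (∑ i, Complex.normSq (x i)) = ∑ i, Complex.normSq (X i) from rfl,
      sum_normSq_eq_norm_sq, Real.sqrt_sq (norm_nonneg _)]
  have hYn : Real.sqrt (∑ j, Complex.normSq (y j)) = ‖Y‖ := by
    rw [show (∑ j, Complex.normSq (y j)) = ∑ j, Complex.normSq (Y j) from rfl,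
      sum_normSq_eq_norm_sq, Real.sqrt_sq (norm_nonneg _)]
  have h1 : star y ⬝ᵥ (E *ᵥ x) = (inner ℂ Y ((Matrix.toEuclideanLin E) X) : ℂ) := by
    rw [EuclideanSpace.inner_eq_star_dotProduct, dotProduct_comm]; rfl
  have h2 : ‖(Matrix.toEuclideanLin E) X‖ ≤ specNorm E * ‖X‖ := by
    simpa [specNorm] using
      (LinearMap.toContinuousLinearMap (Matrix.toEuclideanLin E)).le_opNorm X
  have h3 : ‖(inner ℂ Y ((Matrix.toEuclideanLin E) X) : ℂ)‖ ≤ specNorm E * ‖X‖ * ‖Y‖ := by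
    calc ‖(inner ℂ Y ((Matrix.toEuclideanLin E) X) : ℂ)‖
        ≤ ‖Y‖ * ‖(Matrix.toEuclideanLin E) X‖ := norm_inner_le_norm _ _
      _ ≤ ‖Y‖ * (specNorm E * ‖X‖) :=
          mul_le_mul_of_nonneg_left h2 (norm_nonneg _)
      _ = specNorm E * ‖X‖ * ‖Y‖ := by ring
  rw [h1, hXn, hYn]
  have h4 : -‖(inner ℂ Y ((Matrix.toEuclideanLin E) X) : ℂ)‖
      ≤ (inner ℂ Y ((Matrix.toEuclideanLin E) X) : ℂ).re := by
    have := abs_le.mp (Complex.abs_re_le_norm (inner ℂ Y ((Matrix.toEuclideanLin E) X) : ℂ))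
    simpa using this.1
  linarith

/-- The smallest eigenvalue `lamN` of `A = fromBlocks H₁ Eᴴ E H₂` is at most the
smallest eigenvalue `lamtN` of `Ã = fromBlocks H₁ 0 0 H₂`; and if `lamN < lamtN`
then, with `ηN` the distance from `lamtN` to the spectrum of the block not
containing it, `lamtN − lamN ≤ 2‖E‖²/(ηN + √(ηN² + 4‖E‖²))`. -/
theorem smallest_eigenvalue_block_perturbation {m n : ℕ}
    (H₁ : Matrix (Fin m) (Fin m) ℂ) (H₂ : Matrix (Fin n) (Fin n) ℂ)
    (E : Matrix (Fin n) (Fin m) ℂ)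
    (hH₁ : H₁.IsHermitian) (hH₂ : H₂.IsHermitian)
    (hA : (Matrix.fromBlocks H₁ Eᴴ E H₂).IsHermitian)
    (lamN lamtN ηN : ℝ)
    (hlamN : IsLeast (Set.range hA.eigenvalues) lamN)
    (hlamtN : IsLeast (Set.range hH₁.eigenvalues ∪ Set.range hH₂.eigenvalues) lamtN)
    (hηN : (lamtN ∈ Set.range hH₁.eigenvalues →
              ηN = ⨅ j, |lamtN - hH₂.eigenvalues j|) ∧
           (lamtN ∉ Set.range hH₁.eigenvalues →
              ηN = ⨅ j, |lamtN - hH₁.eigenvalues j|)) :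
    lamN ≤ lamtN ∧
    (lamN < lamtN →
      lamtN - lamN ≤
        2 * specNorm E ^ 2 / (ηN + Real.sqrt (ηN ^ 2 + 4 * specNorm E ^ 2))) := by
  have hAlow : ∀ k, lamN ≤ hA.eigenvalues k := fun k => hlamN.2 ⟨k, rfl⟩
  have hηN0 : 0 ≤ ηN := by
    rcases Classical.em (lamtN ∈ Set.range hH₁.eigenvalues) with hmem | hmem
    · rw [hηN.1 hmem]; exact Real.iInf_nonneg fun j => abs_nonneg _
    · rw [hηN.2 hmem]; exact Real.iInf_nonneg fun j => abs_nonneg _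
  -- Part 1 : lamN ≤ lamtN
  have part1 : lamN ≤ lamtN := by
    rcases hlamtN.1 with ⟨i, hi⟩ | ⟨j, hj⟩
    · set w : Fin m → ℂ := (WithLp.equiv 2 _) (hH₁.eigenvectorBasis i) with hw
      have hEig : H₁ *ᵥ w = lamtN • w := by
        have h := hH₁.mulVec_eigenvectorBasis i
        rw [hi] at h; exact h
      have hnw : ∑ i', Complex.normSq (w i') = 1 := by
        rw [show (∑ i', Complex.normSq (w i'))
            = ∑ i', Complex.normSq ((hH₁.eigenvectorBasis i) i') from rfl,
          sum_normSq_eq_norm_sq, hH₁.eigenvectorBasis.orthonormal.1 i]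
        norm_num
      have hu := aux_rayleigh hA hAlow (Sum.elim w (0 : Fin n → ℂ))
      rw [dot_block] at hu
      simp only [mulVec_zero, dotProduct_zero, star_zero, zero_dotProduct, add_zero] at hu
      rw [hEig, dot_smul_re, hnw, mul_one] at hu
      have hsum : ∑ k, Complex.normSq (Sum.elim w (0 : Fin n → ℂ) k) = 1 := by
        rw [Fintype.sum_sum_type]
        simp [hnw]
      rw [hsum, mul_one] at hu
      exact hu
    · set w : Fin n → ℂ := (WithLp.equiv 2 _) (hH₂.eigenvectorBasis j) with hw
      have hEig : H₂ *ᵥ w = lamtN • w := by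
        have h := hH₂.mulVec_eigenvectorBasis j
        rw [hj] at h; exact h
      have hnw : ∑ j', Complex.normSq (w j') = 1 := by
        rw [show (∑ j', Complex.normSq (w j'))
            = ∑ j', Complex.normSq ((hH₂.eigenvectorBasis j) j') from rfl,
          sum_normSq_eq_norm_sq, hH₂.eigenvectorBasis.orthonormal.1 j]
        norm_num
      have hu := aux_rayleigh hA hAlow (Sum.elim (0 : Fin m → ℂ) w)
      rw [dot_block] at hu
      simp only [mulVec_zero, dotProduct_zero, star_zero, zero_dotProduct, add_zero,
        zero_add] at hu
      rw [hEig, dot_smul_re, hnw, mul_one] at hu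
      have hsum : ∑ k, Complex.normSq (Sum.elim (0 : Fin m → ℂ) w k) = 1 := by
        rw [Fintype.sum_sum_type]
        simp [hnw]
      rw [hsum, mul_one] at hu
      exact hu
  refine ⟨part1, fun hlt => ?_⟩
  -- Part 2
  obtain ⟨k, hk⟩ := hlamN.1
  set v : (Fin m ⊕ Fin n) → ℂ := (WithLp.equiv 2 _) (hA.eigenvectorBasis k) with hv
  have hAv : Matrix.fromBlocks H₁ Eᴴ E H₂ *ᵥ v = lamN • v := by
    have h := hA.mulVec_eigenvectorBasis k
    rw [hk] at h; exact h
  set x : Fin m → ℂ := v ∘ Sum.inl with hx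
  set y : Fin n → ℂ := v ∘ Sum.inr with hy
  have hvelim : v = Sum.elim x y := by funext i; cases i <;> rfl
  set na := ∑ i, Complex.normSq (x i) with hna
  set nb := ∑ j, Complex.normSq (y j) with hnb
  have hna0 : 0 ≤ na := Finset.sum_nonneg fun _ _ => Complex.normSq_nonneg _
  have hnb0 : 0 ≤ nb := Finset.sum_nonneg fun _ _ => Complex.normSq_nonneg _
  have hsum1 : na + nb = 1 := by
    have h1 : ∑ i', Complex.normSq (v i') = 1 := by
      rw [show (∑ i', Complex.normSq (v i'))
          = ∑ i', Complex.normSq ((hA.eigenvectorBasis k) i') from rfl,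
        sum_normSq_eq_norm_sq, hA.eigenvectorBasis.orthonormal.1 k]
      norm_num
    rw [← h1, Fintype.sum_sum_type]
    rfl
  set a := Real.sqrt na with haa
  set b := Real.sqrt nb with hbb
  have ha2 : a ^ 2 = na := Real.sq_sqrt hna0
  have hb2 : b ^ 2 = nb := Real.sq_sqrt hnb0
  have hab : 0 < a ∨ 0 < b := by
    rcases lt_or_ge 0 na with h' | h'
    · exact Or.inl (Real.sqrt_pos.mpr h')
    · right
      apply Real.sqrt_pos.mpr
      have : na = 0 := le_antisymm h' hna0
      linarith
  set ε := specNorm E with hε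
  have hε0 : 0 ≤ ε := specNorm_nonneg E
  -- the quadratic form identity
  have hS1 : (star (Sum.elim x y) ⬝ᵥ (Matrix.fromBlocks H₁ Eᴴ E H₂ *ᵥ Sum.elim x y)).re
      = lamN * (na + nb) := by
    rw [← hvelim, hAv, dot_smul_re]
    congr 1
    rw [Fintype.sum_sum_type]
    rfl
  have hS2 : (star (Sum.elim x y) ⬝ᵥ (Matrix.fromBlocks H₁ Eᴴ E H₂ *ᵥ Sum.elim x y)).re
      = (star x ⬝ᵥ (H₁ *ᵥ x)).re + 2 * (star y ⬝ᵥ (E *ᵥ x)).re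
        + (star y ⬝ᵥ (H₂ *ᵥ y)).re := by
    rw [dot_block, Complex.add_re, Complex.add_re, Complex.add_re, cross_conj,
      Complex.conj_re]
    ring
  have e3 := cross_bound E x y
  rw [← hna, ← hnb, ← haa, ← hbb, ← hε] at e3
  have hδ : 0 < lamtN - lamN := sub_pos.mpr hlt
  by_cases hmem : lamtN ∈ Set.range hH₁.eigenvalues
  · have hη := hηN.1 hmem
    have hH1low : ∀ i', lamtN ≤ hH₁.eigenvalues i' := fun i' => hlamtN.2 (Or.inl ⟨i', rfl⟩)
    have hH2low : ∀ j, lamtN + ηN ≤ hH₂.eigenvalues j := by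
      intro j
      have h1 : lamtN ≤ hH₂.eigenvalues j := hlamtN.2 (Or.inr ⟨j, rfl⟩)
      have h2 : ηN ≤ |lamtN - hH₂.eigenvalues j| := by
        rw [hη]
        exact ciInf_le ⟨0, by rintro r ⟨j', rfl⟩; exact abs_nonneg _⟩ j
      rw [abs_sub_comm, abs_of_nonneg (by linarith)] at h2
      linarith
    have e1 := aux_rayleigh hH₁ hH1low x
    have e2 := aux_rayleigh hH₂ hH2low y
    rw [← hna] at e1
    rw [← hnb] at e2
    have hcomb : (lamtN - lamN) * a ^ 2 + ((lamtN - lamN) + ηN) * b ^ 2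
        ≤ 2 * ε * a * b := by
      rw [ha2, hb2]
      nlinarith [hS1, hS2, e1, e2, e3]
    exact key_alg hδ hηN0 hε0 (Real.sqrt_nonneg _) (Real.sqrt_nonneg _) hab hcomb
  · have hη := hηN.2 hmem
    have hmem2 : lamtN ∈ Set.range hH₂.eigenvalues := by
      rcases hlamtN.1 with h | h
      · exact absurd h hmem
      · exact h
    have hH2low : ∀ j, lamtN ≤ hH₂.eigenvalues j := fun j => hlamtN.2 (Or.inr ⟨j, rfl⟩)
    have hH1low : ∀ i', lamtN + ηN ≤ hH₁.eigenvalues i' := by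
      intro i'
      have h1 : lamtN ≤ hH₁.eigenvalues i' := hlamtN.2 (Or.inl ⟨i', rfl⟩)
      have h2 : ηN ≤ |lamtN - hH₁.eigenvalues i'| := by
        rw [hη]
        exact ciInf_le ⟨0, by rintro r ⟨j', rfl⟩; exact abs_nonneg _⟩ i'
      rw [abs_sub_comm, abs_of_nonneg (by linarith)] at h2
      linarith
    have e1 := aux_rayleigh hH₁ hH1low x
    have e2 := aux_rayleigh hH₂ hH2low y
    rw [← hna] at e1
    rw [← hnb] at e2
    have hcomb : (lamtN - lamN) * b ^ 2 + ((lamtN - lamN) + ηN) * a ^ 2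
        ≤ 2 * ε * b * a := by
      rw [ha2, hb2]
      nlinarith [hS1, hS2, e1, e2, e3]
    exact key_alg hδ hηN0 hε0 (Real.sqrt_nonneg _) (Real.sqrt_nonneg _) hab.symm hcomb
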